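/- Let f and g be metrics on ℕ such that neither (ℕ,f) nor (ℕ,g) has an isolated point, i.e., for every n ∈ ℕ and every ε > 0 there is m ≠ n with f(n,m) < ε, and likewise for g. Let 0 < s < r and let ℛ ⊆ ℕ × ℕ be a correspondence such that |f(m,m') − g(n,n')| < 2s whenever m ℛ n and m' ℛ n'. Then there exists a bijection π : ℕ → ℕ such that |f(m,n) − g(π(m), π(n))| ≤ 2r for all m, n ∈ ℕ. -/

import Mathlib

/- Context: a metric on ℕ is a function d : ℕ × ℕ → ℝ with d(m,n) = 0 iff m = n,
symmetry, and the triangle inequality.  A correspondence between A and B is a relation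
ℛ ⊆ A × B such that every a ∈ A is related to some b ∈ B and vice versa. -/

/-- `d` is a metric on `ℕ`. -/
def IsMetricOnNat (d : ℕ → ℕ → ℝ) : Prop :=
  (∀ m n, d m n = 0 ↔ m = n) ∧ (∀ m n, d m n = d n m) ∧
    (∀ m n k, d m k ≤ d m n + d n k)

theorem foldrMin_le' {h : ℕ → ℝ} {c : ℝ} : ∀ {l : List ℕ} {x : ℕ}, x ∈ l →
    l.foldr (fun y m => min (h y) m) c ≤ h x := by
  intro l
  induction l with
  | nil => intro x hx; exact absurd hx List.not_mem_nil
  | cons a t ih =>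
    intro x hx
    rcases List.mem_cons.1 hx with rfl | hx
    · exact min_le_left _ _
    · exact le_trans (min_le_right _ _) (ih hx)

theorem foldrMin_le_c' {h : ℕ → ℝ} {c : ℝ} : ∀ {l : List ℕ},
    l.foldr (fun y m => min (h y) m) c ≤ c := by
  intro l
  induction l with
  | nil => exact le_refl c
  | cons a t ih => exact le_trans (min_le_right _ _) ih

theorem foldrMin_pos' {h : ℕ → ℝ} {c : ℝ} (hc : 0 < c) : ∀ {l : List ℕ},
    (∀ x ∈ l, 0 < h x) → 0 < l.foldr (fun y m => min (h y) m) c := by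
  intro l
  induction l with
  | nil => intro _; exact hc
  | cons a t ih =>
    intro hl
    exact lt_min (hl a List.mem_cons_self) (ih fun x hx => hl x (List.mem_cons_of_mem a hx))

theorem le_foldrMax' : ∀ {l : List ℕ} {x : ℕ}, x ∈ l → x ≤ l.foldr max 0 := by
  intro l
  induction l with
  | nil => intro x hx; exact absurd hx List.not_mem_nil
  | cons a t ih =>
    intro x hx
    rcases List.mem_cons.1 hx with rfl | hx
    · exact le_max_left _ _
    · exact le_trans (ih hx) (le_max_right _ _)

theorem buildSeq' (step : List (ℕ×ℕ) → ℕ×ℕ) : ∃ pairs : ℕ → List (ℕ×ℕ),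
    pairs 0 = [] ∧ ∀ k, pairs (k+1) = pairs k ++ [step (pairs k)] :=
  ⟨fun k => Nat.rec [] (fun _ ih => ih ++ [step ih]) k, rfl, fun _ => rfl⟩

theorem metric_tri4 {d : ℕ → ℕ → ℝ} (h2 : ∀ m n, d m n = d n m)
    (h3 : ∀ m n k, d m k ≤ d m n + d n k) (p q u v : ℕ) :
    d u v ≤ d p u + d p q + d q v := by
  have a1 := h3 u p v
  have a2 := h3 p q v
  rw [h2 u p] at a1
  linarith

theorem stmt11 (f g : ℕ → ℕ → ℝ) (hf : IsMetricOnNat f) (hg : IsMetricOnNat g)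
    -- neither (ℕ,f) nor (ℕ,g) has an isolated point
    (hfperf : ∀ n : ℕ, ∀ ε > (0 : ℝ), ∃ m, m ≠ n ∧ f n m < ε)
    (hgperf : ∀ n : ℕ, ∀ ε > (0 : ℝ), ∃ m, m ≠ n ∧ g n m < ε)
    (s r : ℝ) (hs : 0 < s) (hsr : s < r)
    (R : ℕ → ℕ → Prop)
    (hR1 : ∀ m, ∃ n, R m n) (hR2 : ∀ n, ∃ m, R m n)
    (hR : ∀ m m' n n', R m n → R m' n' → |f m m' - g n n'| < 2 * s) :
    ∃ π : ℕ ≃ ℕ, ∀ m n, |f m n - g (π m) (π n)| ≤ 2 * r := by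
  classical
  obtain ⟨hf1, hf2, hf3⟩ := hf
  obtain ⟨hg1, hg2, hg3⟩ := hg
  have hf0 : ∀ m, f m m = 0 := fun m => (hf1 m m).2 rfl
  have hg0 : ∀ m, g m m = 0 := fun m => (hg1 m m).2 rfl
  have hfnn : ∀ m n, 0 ≤ f m n := by
    intro m n
    have h := hf3 m n m
    rw [hf0, hf2 n m] at h
    linarith
  have hgnn : ∀ m n, 0 ≤ g m n := by
    intro m n
    have h := hg3 m n m
    rw [hg0, hg2 n m] at h
    linarith
  have hfpos : ∀ m n, m ≠ n → 0 < f m n := by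
    intro m n h
    exact (hfnn m n).lt_of_ne fun e => h ((hf1 m n).1 e.symm)
  have hgpos : ∀ m n, m ≠ n → 0 < g m n := by
    intro m n h
    exact (hgnn m n).lt_of_ne fun e => h ((hg1 m n).1 e.symm)
  have hrs : (0:ℝ) < r - s := by linarith
  -- fresh nearby point lemmas
  have near_f : ∀ (n : ℕ) (L : List ℕ), ∃ x, x ∉ L ∧ f n x < r - s := by
    intro n L
    set δ := (L.filter (fun x => decide (x ≠ n))).foldr (fun y m => min (f n y) m) (r - s)
      with hδ
    have hδpos : 0 < δ := by
      apply foldrMin_pos' hrs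
      intro x hx
      have hx' := List.mem_filter.1 hx
      exact hfpos n x fun e => (of_decide_eq_true hx'.2) e.symm
    obtain ⟨x, hxn, hxδ⟩ := hfperf n δ hδpos
    refine ⟨x, ?_, lt_of_lt_of_le hxδ foldrMin_le_c'⟩
    intro hxL
    have hxF : x ∈ L.filter (fun x => decide (x ≠ n)) :=
      List.mem_filter.2 ⟨hxL, decide_eq_true hxn⟩
    exact absurd hxδ (not_lt.2 (foldrMin_le' hxF))
  have near_g : ∀ (n : ℕ) (L : List ℕ), ∃ x, x ∉ L ∧ g n x < r - s := by
    intro n L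
    set δ := (L.filter (fun x => decide (x ≠ n))).foldr (fun y m => min (g n y) m) (r - s)
      with hδ
    have hδpos : 0 < δ := by
      apply foldrMin_pos' hrs
      intro x hx
      have hx' := List.mem_filter.1 hx
      exact hgpos n x fun e => (of_decide_eq_true hx'.2) e.symm
    obtain ⟨x, hxn, hxδ⟩ := hgperf n δ hδpos
    refine ⟨x, ?_, lt_of_lt_of_le hxδ foldrMin_le_c'⟩
    intro hxL
    have hxF : x ∈ L.filter (fun x => decide (x ≠ n)) :=
      List.mem_filter.2 ⟨hxL, decide_eq_true hxn⟩
    exact absurd hxδ (not_lt.2 (foldrMin_le' hxF))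
  choose Rn hRn using hR1
  choose Rm hRm using hR2
  choose cf hcf hcfd using near_f
  choose cg hcg hcgd using near_g
  have hfresh : ∀ (L : List ℕ), L.foldr max 0 + 1 ∉ L := by
    intro L hL
    have := le_foldrMax' hL
    omega
  -- the step function
  obtain ⟨stepFn, hstepFn⟩ : ∃ F : List (ℕ×ℕ) → ℕ×ℕ, ∀ L, F L =
      (if L.length % 2 = 0 then
        (if L.length / 2 ∈ L.map Prod.fst then
          ((L.map Prod.fst).foldr max 0 + 1,
            cg (Rn ((L.map Prod.fst).foldr max 0 + 1)) (L.map Prod.snd))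
        else (L.length / 2, cg (Rn (L.length / 2)) (L.map Prod.snd)))
      else
        (if L.length / 2 ∈ L.map Prod.snd then
          (cf (Rm ((L.map Prod.snd).foldr max 0 + 1)) (L.map Prod.fst),
            (L.map Prod.snd).foldr max 0 + 1)
        else (cf (Rm (L.length / 2)) (L.map Prod.fst), L.length / 2))) :=
    ⟨_, fun _ => rfl⟩
  obtain ⟨pairs, hp0, hps⟩ := buildSeq' stepFn
  obtain ⟨a, haa⟩ : ∃ a : ℕ → ℕ, ∀ k, a k = (stepFn (pairs k)).1 := ⟨_, fun _ => rfl⟩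
  obtain ⟨b, hbb⟩ : ∃ b : ℕ → ℕ, ∀ k, b k = (stepFn (pairs k)).2 := ⟨_, fun _ => rfl⟩
  have hpairs : ∀ k, pairs k = (List.range k).map (fun j => stepFn (pairs j)) := by
    intro k
    induction k with
    | zero => simp [hp0]
    | succ k ih =>
      rw [hps, List.range_succ, List.map_append, ← ih]
      simp
  have hlen : ∀ k, (pairs k).length = k := by
    intro k; rw [hpairs]; simp
  have hmemA : ∀ k x, x ∈ (pairs k).map Prod.fst ↔ ∃ j < k, a j = x := by
    intro k x
    rw [hpairs]
    simp only [List.map_map, List.mem_map, List.mem_range, Function.comp_apply]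
    constructor
    · rintro ⟨j, hj, rfl⟩; exact ⟨j, hj, haa j⟩
    · rintro ⟨j, hj, rfl⟩; exact ⟨j, hj, (haa j).symm⟩
  have hmemB : ∀ k x, x ∈ (pairs k).map Prod.snd ↔ ∃ j < k, b j = x := by
    intro k x
    rw [hpairs]
    simp only [List.map_map, List.mem_map, List.mem_range, Function.comp_apply]
    constructor
    · rintro ⟨j, hj, rfl⟩; exact ⟨j, hj, hbb j⟩
    · rintro ⟨j, hj, rfl⟩; exact ⟨j, hj, (hbb j).symm⟩
  -- main invariants of each step
  have hmain : ∀ k, (a k ∉ (pairs k).map Prod.fst) ∧ (b k ∉ (pairs k).map Prod.snd) ∧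
      ∃ m n, R m n ∧ 0 ≤ f m (a k) ∧ 0 ≤ g n (b k) ∧ f m (a k) + g n (b k) ≤ r - s := by
    intro k
    rw [haa, hbb, hstepFn]
    split_ifs with h1 h2 h2
    · refine ⟨hfresh _, hcg _ _,
        List.foldr max 0 (List.map Prod.fst (pairs k)) + 1,
        Rn (List.foldr max 0 (List.map Prod.fst (pairs k)) + 1),
        hRn _, hfnn _ _, hgnn _ _, ?_⟩
      have e1 : f (List.foldr max 0 (List.map Prod.fst (pairs k)) + 1)
          (List.foldr max 0 (List.map Prod.fst (pairs k)) + 1) = 0 := hf0 _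
      have := hcgd (Rn (List.foldr max 0 (List.map Prod.fst (pairs k)) + 1))
        (List.map Prod.snd (pairs k))
      simp only [e1] at *
      linarith
    · refine ⟨h2, hcg _ _, (pairs k).length / 2, Rn ((pairs k).length / 2),
        hRn _, hfnn _ _, hgnn _ _, ?_⟩
      have e1 : f ((pairs k).length / 2) ((pairs k).length / 2) = 0 := hf0 _
      have := hcgd (Rn ((pairs k).length / 2)) (List.map Prod.snd (pairs k))
      simp only [e1] at *
      linarith
    · refine ⟨hcf _ _, hfresh _,
        Rm (List.foldr max 0 (List.map Prod.snd (pairs k)) + 1),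
        List.foldr max 0 (List.map Prod.snd (pairs k)) + 1,
        hRm _, hfnn _ _, hgnn _ _, ?_⟩
      have e1 : g (List.foldr max 0 (List.map Prod.snd (pairs k)) + 1)
          (List.foldr max 0 (List.map Prod.snd (pairs k)) + 1) = 0 := hg0 _
      have := hcfd (Rm (List.foldr max 0 (List.map Prod.snd (pairs k)) + 1))
        (List.map Prod.fst (pairs k))
      simp only [e1] at *
      linarith
    · refine ⟨hcf _ _, h2, Rm ((pairs k).length / 2), (pairs k).length / 2,
        hRm _, hfnn _ _, hgnn _ _, ?_⟩
      have e1 : g ((pairs k).length / 2) ((pairs k).length / 2) = 0 := hg0 _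
      have := hcfd (Rm ((pairs k).length / 2)) (List.map Prod.fst (pairs k))
      simp only [e1] at *
      linarith
  -- injectivity
  have hainj : Function.Injective a := by
    have hnew : ∀ j k, j < k → a j ≠ a k := by
      intro j k hjk e
      exact (hmain k).1 ((hmemA k (a k)).2 ⟨j, hjk, e⟩)
    intro j k e
    rcases lt_trichotomy j k with h | h | h
    · exact absurd e (hnew j k h)
    · exact h
    · exact absurd e.symm (hnew k j h)
  have hbinj : Function.Injective b := by
    have hnew : ∀ j k, j < k → b j ≠ b k := by
      intro j k hjk e
      exact (hmain k).2.1 ((hmemB k (b k)).2 ⟨j, hjk, e⟩)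
    intro j k e
    rcases lt_trichotomy j k with h | h | h
    · exact absurd e (hnew j k h)
    · exact h
    · exact absurd e.symm (hnew k j h)
  -- surjectivity
  have hasurj : Function.Surjective a := by
    intro m
    by_cases hm : ∃ j < 2 * m, a j = m
    · obtain ⟨j, _, hj⟩ := hm; exact ⟨j, hj⟩
    · refine ⟨2 * m, ?_⟩
      rw [haa, hstepFn, hlen]
      rw [if_pos (by omega : 2 * m % 2 = 0)]
      have ht : 2 * m / 2 = m := by omega
      rw [ht]
      rw [if_neg (fun hc => hm ((hmemA (2 * m) m).1 hc))]
  have hbsurj : Function.Surjective b := by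
    intro m
    by_cases hm : ∃ j < 2 * m + 1, b j = m
    · obtain ⟨j, _, hj⟩ := hm; exact ⟨j, hj⟩
    · refine ⟨2 * m + 1, ?_⟩
      rw [hbb, hstepFn, hlen]
      rw [if_neg (by omega : ¬ (2 * m + 1) % 2 = 0)]
      have ht : (2 * m + 1) / 2 = m := by omega
      rw [ht]
      rw [if_neg (fun hc => hm ((hmemB (2 * m + 1) m).1 hc))]
  -- build the bijection
  let ea : ℕ ≃ ℕ := Equiv.ofBijective a ⟨hainj, hasurj⟩
  let eb : ℕ ≃ ℕ := Equiv.ofBijective b ⟨hbinj, hbsurj⟩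
  refine ⟨ea.symm.trans eb, ?_⟩
  intro m n
  set k := ea.symm m with hk
  set j := ea.symm n with hj
  have hak : a k = m := ea.apply_symm_apply m
  have haj : a j = n := ea.apply_symm_apply n
  have hπm : (ea.symm.trans eb) m = b k := rfl
  have hπn : (ea.symm.trans eb) n = b j := rfl
  rw [hπm, hπn, ← hak, ← haj]
  obtain ⟨mk, nk, hRk, hk1, hk2, hk3⟩ := (hmain k).2.2
  obtain ⟨mj, nj, hRj, hj1, hj2, hj3⟩ := (hmain j).2.2
  have habs := hR mk mj nk nj hRk hRj
  rw [abs_sub_lt_iff] at habs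
  obtain ⟨hu1, hu2⟩ := habs
  have t1 : f (a k) (a j) ≤ f mk (a k) + f mk mj + f mj (a j) :=
    metric_tri4 hf2 hf3 mk mj (a k) (a j)
  have t2 : f mk mj ≤ f (a k) mk + f (a k) (a j) + f (a j) mj :=
    metric_tri4 hf2 hf3 (a k) (a j) mk mj
  have t3 : g (b k) (b j) ≤ g nk (b k) + g nk nj + g nj (b j) :=
    metric_tri4 hg2 hg3 nk nj (b k) (b j)
  have t4 : g nk nj ≤ g (b k) nk + g (b k) (b j) + g (b j) nj :=
    metric_tri4 hg2 hg3 (b k) (b j) nk nj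
  have s1 : f (a k) mk = f mk (a k) := hf2 _ _
  have s2 : f (a j) mj = f mj (a j) := hf2 _ _
  have s3 : g (b k) nk = g nk (b k) := hg2 _ _
  have s4 : g (b j) nj = g nj (b j) := hg2 _ _
  rw [abs_sub_le_iff]
  constructor <;> linarith
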